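/- Let T be a nonnegative superadditive passage-time functional in exponential LPP, and suppose T^R_{0,r} (the passage time from 0 to (r,r) constrained to a thin rectangle R) is stochastically larger than the sum of k i.i.d. copies of T^R_{0, r/k}. If for each fixed k, liminf_{r→∞} P(T^R_{0, r/k} ≥ 4r/k + (r/k)^{1/3}) ≥ β > 0 for some β independent of k, then P(T^R_{0,r} ≥ 4r + k^{2/3} r^{1/3}) ≥ β^k for all large r; in particular, for every x > 0 there exist C, c > 0 such that P(T^R_{0,r} > 4r + x r^{1/3}) ≥ C e^{−c x^{3/2}} for all large r. -/

import Mathlib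

open MeasureTheory ProbabilityTheory

/-- if the constrained passage time `Z r = T^R_{0,r}` stochastically
dominates sums of `k` i.i.d. copies of `Z (r/k)` (encoded by the resulting tail
inequality `P(Z r ≥ k s) ≥ P(Z (r/k) ≥ s)^k`), and for each `k` the probability
`P(Z (r/k) ≥ 4r/k + (r/k)^{1/3}) ≥ β > 0` for all large `r`, then
`P(Z r ≥ 4r + k^{2/3} r^{1/3}) ≥ β^k` for all large `r`; in particular for every `x > 0`
there are `C, c > 0` with `P(Z r > 4r + x r^{1/3}) ≥ C e^{−c x^{3/2}}` for all large `r`. -/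
theorem stmt11 {Ω : Type} [MeasurableSpace Ω] (P : Measure Ω) [IsProbabilityMeasure P]
    (Z : ℝ → Ω → ℝ) (β : ℝ) (hβ : 0 < β)
    (hdom : ∀ k : ℕ, 1 ≤ k → ∀ r : ℝ, 0 < r → ∀ s : ℝ,
      (P {ω | s ≤ Z (r / k) ω}) ^ k ≤ P {ω | (k : ℝ) * s ≤ Z r ω})
    (hβk : ∀ k : ℕ, 1 ≤ k → ∃ r₀ : ℝ, ∀ r : ℝ, r₀ ≤ r →
      ENNReal.ofReal β ≤ P {ω | 4 * r / k + (r / k) ^ ((1 : ℝ) / 3) ≤ Z (r / k) ω}) :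
    (∀ k : ℕ, 1 ≤ k → ∃ r₀ : ℝ, ∀ r : ℝ, r₀ ≤ r →
      ENNReal.ofReal (β ^ k)
        ≤ P {ω | 4 * r + (k : ℝ) ^ ((2 : ℝ) / 3) * r ^ ((1 : ℝ) / 3) ≤ Z r ω}) ∧
    (∀ x : ℝ, 0 < x → ∃ C > (0 : ℝ), ∃ c > (0 : ℝ), ∃ r₀ : ℝ, ∀ r : ℝ, r₀ ≤ r →
      ENNReal.ofReal (C * Real.exp (-c * x ^ ((3 : ℝ) / 2)))
        ≤ P {ω | 4 * r + x * r ^ ((1 : ℝ) / 3) < Z r ω}) := by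
  have main : ∀ k : ℕ, 1 ≤ k → ∃ r₀ : ℝ, ∀ r : ℝ, r₀ ≤ r →
      ENNReal.ofReal (β ^ k)
        ≤ P {ω | 4 * r + (k : ℝ) ^ ((2 : ℝ) / 3) * r ^ ((1 : ℝ) / 3) ≤ Z r ω} := by
    intro k hk
    obtain ⟨r₀, h⟩ := hβk k hk
    refine ⟨max r₀ 1, fun r hr => ?_⟩
    have hr1 : (1 : ℝ) ≤ r := le_trans (le_max_right _ _) hr
    have hrpos : (0 : ℝ) < r := lt_of_lt_of_le one_pos hr1
    have hkpos : (0 : ℝ) < (k : ℝ) := by exact_mod_cast hk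
    have hks : (k : ℝ) * (4 * r / k + (r / k) ^ ((1 : ℝ) / 3))
        = 4 * r + (k : ℝ) ^ ((2 : ℝ) / 3) * r ^ ((1 : ℝ) / 3) := by
      have h1 : ((r : ℝ) / k) ^ ((1 : ℝ) / 3)
          = r ^ ((1 : ℝ) / 3) / (k : ℝ) ^ ((1 : ℝ) / 3) :=
        Real.div_rpow hrpos.le (Nat.cast_nonneg k) _
      have h2 : (k : ℝ) ^ ((2 : ℝ) / 3) * (k : ℝ) ^ ((1 : ℝ) / 3) = (k : ℝ) := by
        rw [← Real.rpow_add hkpos]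
        norm_num
      have hk13 : (k : ℝ) ^ ((1 : ℝ) / 3) ≠ 0 :=
        ne_of_gt (Real.rpow_pos_of_pos hkpos _)
      rw [h1, mul_add, mul_div_cancel₀ _ (ne_of_gt hkpos)]
      congr 1
      field_simp
      linear_combination (-1 : ℝ) * h2
    calc ENNReal.ofReal (β ^ k) = (ENNReal.ofReal β) ^ k := ENNReal.ofReal_pow hβ.le k
      _ ≤ (P {ω | 4 * r / k + (r / k) ^ ((1 : ℝ) / 3) ≤ Z (r / k) ω}) ^ k :=
          pow_le_pow_left' (h r (le_trans (le_max_left _ _) hr)) k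
      _ ≤ P {ω | (k : ℝ) * (4 * r / k + (r / k) ^ ((1 : ℝ) / 3)) ≤ Z r ω} :=
          hdom k hk r hrpos _
      _ = P {ω | 4 * r + (k : ℝ) ^ ((2 : ℝ) / 3) * r ^ ((1 : ℝ) / 3) ≤ Z r ω} := by
          rw [hks]
  refine ⟨main, ?_⟩
  intro x hx
  have hβ1 : β ≤ 1 := by
    obtain ⟨r₀, h⟩ := hβk 1 le_rfl
    have h1 := (h r₀ le_rfl).trans (prob_le_one)
    exact ENNReal.ofReal_le_one.mp h1
  set t : ℝ := x ^ ((3 : ℝ) / 2) with ht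
  have htpos : 0 < t := Real.rpow_pos_of_pos hx _
  set k : ℕ := ⌊t⌋₊ + 1 with hkdef
  have hk1 : 1 ≤ k := Nat.succ_le_succ (Nat.zero_le _)
  obtain ⟨r₀, hpart⟩ := main k hk1
  refine ⟨β, hβ, 1 - Real.log β, by
      have := Real.log_nonpos hβ.le hβ1; linarith, max r₀ 1, fun r hr => ?_⟩
  have hr1 : (1 : ℝ) ≤ r := le_trans (le_max_right _ _) hr
  have hrpos : (0 : ℝ) < r := lt_of_lt_of_le one_pos hr1
  -- key real inequality: β * exp (-(1 - log β) * t) ≤ β ^ k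
  have hkey : β * Real.exp (-(1 - Real.log β) * t) ≤ β ^ k := by
    have h1 : Real.exp (-(1 - Real.log β) * t) ≤ Real.exp (Real.log β * t) := by
      apply Real.exp_le_exp.mpr
      nlinarith [htpos.le]
    have h2 : Real.exp (Real.log β * t) = β ^ t := (Real.rpow_def_of_pos hβ _).symm
    have h3 : β ^ t ≤ β ^ ((⌊t⌋₊ : ℝ)) :=
      Real.rpow_le_rpow_of_exponent_ge hβ hβ1 (Nat.floor_le htpos.le)
    have h4 : β ^ ((⌊t⌋₊ : ℝ)) = β ^ (⌊t⌋₊ : ℕ) := Real.rpow_natCast β _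
    calc β * Real.exp (-(1 - Real.log β) * t) ≤ β * β ^ (⌊t⌋₊ : ℕ) := by
          apply mul_le_mul_of_nonneg_left _ hβ.le
          rw [← h4]; exact le_trans (h1.trans_eq h2) h3
      _ = β ^ k := by rw [hkdef, pow_succ]; ring
  have hxk : x < (k : ℝ) ^ ((2 : ℝ) / 3) := by
    have hlt : t < (k : ℝ) := by
      rw [hkdef]; push_cast; exact Nat.lt_floor_add_one t
    have := Real.rpow_lt_rpow htpos.le hlt (by norm_num : (0 : ℝ) < 2 / 3)
    have hxx : (x ^ ((3 : ℝ) / 2)) ^ ((2 : ℝ) / 3) = x := by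
      rw [← Real.rpow_mul hx.le]; norm_num
    calc x = (x ^ ((3 : ℝ) / 2)) ^ ((2 : ℝ) / 3) := hxx.symm
      _ < (k : ℝ) ^ ((2 : ℝ) / 3) := this
  have hsub : {ω | 4 * r + (k : ℝ) ^ ((2 : ℝ) / 3) * r ^ ((1 : ℝ) / 3) ≤ Z r ω}
      ⊆ {ω | 4 * r + x * r ^ ((1 : ℝ) / 3) < Z r ω} := by
    intro ω hω
    have hr13 : 0 < r ^ ((1 : ℝ) / 3) := Real.rpow_pos_of_pos hrpos _
    have : 4 * r + x * r ^ ((1 : ℝ) / 3)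
        < 4 * r + (k : ℝ) ^ ((2 : ℝ) / 3) * r ^ ((1 : ℝ) / 3) := by
      have := mul_lt_mul_of_pos_right hxk hr13
      linarith
    exact lt_of_lt_of_le this hω
  calc ENNReal.ofReal (β * Real.exp (-(1 - Real.log β) * t))
      ≤ ENNReal.ofReal (β ^ k) := ENNReal.ofReal_le_ofReal hkey
    _ ≤ P {ω | 4 * r + (k : ℝ) ^ ((2 : ℝ) / 3) * r ^ ((1 : ℝ) / 3) ≤ Z r ω} :=
        hpart r (le_trans (le_max_left _ _) hr)
    _ ≤ P {ω | 4 * r + x * r ^ ((1 : ℝ) / 3) < Z r ω} := measure_mono hsub
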